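/- Let G be a median graph on vertex set V and let Y ⊆ V be a 1-connected median subalgebra. Then any two points y, y' ∈ Y can be joined by a path of G all of whose vertices lie in Y and whose length equals the graph distance dist(y, y'). In particular, Y is isometrically embedded: the distance in the induced subgraph on Y between any two points of Y equals their graph distance in G. -/

import Mathlib

/-- `m` is a median function for the graph `G`: `G` is connected and for all
`x y z` the vertex `m x y z` is the unique vertex lying (metrically) between
each pair among `x, y, z`. -/
def IsMedianFn {V : Type*} (G : SimpleGraph V) (m : V → V → V → V) : Prop :=
  G.Connected ∧ ∀ x y z : V,
    (G.dist x (m x y z) + G.dist (m x y z) y = G.dist x y ∧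
     G.dist y (m x y z) + G.dist (m x y z) z = G.dist y z ∧
     G.dist x (m x y z) + G.dist (m x y z) z = G.dist x z) ∧
    ∀ w : V,
      (G.dist x w + G.dist w y = G.dist x y ∧
       G.dist y w + G.dist w z = G.dist y z ∧
       G.dist x w + G.dist w z = G.dist x z) → w = m x y z

/-- `Y` is a median subalgebra: it is closed under the median operation. -/
def IsSubalgebra {V : Type*} (m : V → V → V → V) (Y : Set V) : Prop :=
  ∀ x ∈ Y, ∀ y ∈ Y, ∀ z ∈ Y, m x y z ∈ Y

/-- `A` is `C`-connected: any two points of `A` are joined by a finite sequence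
of points of `A` with consecutive points at graph distance at most `C`. -/
def CConnected {V : Type*} (G : SimpleGraph V) (C : ℕ) (A : Set V) : Prop :=
  ∀ x ∈ A, ∀ y ∈ A, ∃ (n : ℕ) (p : ℕ → V), p 0 = x ∧ p n = y ∧
    (∀ i ≤ n, p i ∈ A) ∧ ∀ i < n, G.dist (p i) (p (i + 1)) ≤ C

/-- The `r`-neighbourhood of `A` in the graph metric. -/
def Nbhd {V : Type*} (G : SimpleGraph V) (A : Set V) (r : ℕ) : Set V :=
  {v | ∃ a ∈ A, G.dist v a ≤ r}

/-- `G` has cube dimension at most `R`: any isometrically embedded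
`n`-dimensional Hamming cube has `n ≤ R`. -/
def CubeDimLE {V : Type*} (G : SimpleGraph V) (R : ℕ) : Prop :=
  ∀ (n : ℕ) (f : (Fin n → Bool) → V),
    (∀ a b, G.dist (f a) (f b) = hammingDist a b) → n ≤ R

/-- The median subalgebra generated by `A`. -/
def MedianSpan {V : Type*} (m : V → V → V → V) (A : Set V) : Set V :=
  ⋂₀ {Y : Set V | A ⊆ Y ∧ IsSubalgebra m Y}

/-- `Z` is (metrically) convex in `G`: every vertex on a geodesic between two
points of `Z` belongs to `Z`. -/
def GraphConvex {V : Type*} (G : SimpleGraph V) (Z : Set V) : Prop :=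
  ∀ x ∈ Z, ∀ y ∈ Z, ∀ w : V, G.dist x w + G.dist w y = G.dist x y → w ∈ Z

/-- The convex hull of `A`: the intersection of all convex sets containing `A`. -/
def ConvexHullG {V : Type*} (G : SimpleGraph V) (A : Set V) : Set V :=
  ⋂₀ {Z : Set V | GraphConvex G Z ∧ A ⊆ Z}

private lemma median_step {V : Type*} {G : SimpleGraph V} {m : V → V → V → V}
    (hm : IsMedianFn G m) {Y : Set V} (hsub : IsSubalgebra m Y) :
    ∀ n : ℕ, ∀ y y' : V, y ∈ Y → y' ∈ Y → y ≠ y' →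
    ∀ p : ℕ → V, p 0 = y → p n = y' → (∀ i ≤ n, p i ∈ Y) →
    (∀ i < n, G.dist (p i) (p (i + 1)) ≤ 1) →
    ∃ u ∈ Y, G.dist y u = 1 ∧ G.dist y u + G.dist u y' = G.dist y y' ∧
      ∃ n' < n, ∃ q : ℕ → V, q 0 = u ∧ q n' = y' ∧ (∀ i ≤ n', q i ∈ Y) ∧
        ∀ i < n', G.dist (q i) (q (i + 1)) ≤ 1 := by
  have hG := hm.1
  intro n
  induction n using Nat.strong_induction_on with
  | _ n IH =>
  intro y y' hy hy' hne p hp0 hpn hpY hpd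
  have hn : n ≠ 0 := by rintro rfl; exact hne (hp0 ▸ hpn)
  have hnpos : 0 < n := Nat.pos_of_ne_zero hn
  set u := m y (p 1) y' with hu_def
  have hp1Y : p 1 ∈ Y := hpY 1 hnpos
  have huY : u ∈ Y := hsub y hy _ hp1Y y' hy'
  obtain ⟨⟨B1, B2, B3⟩, -⟩ := hm.2 y (p 1) y'
  rw [← hu_def] at B1 B2 B3
  have hd1 : G.dist y (p 1) ≤ 1 := by have := hpd 0 hnpos; rwa [hp0] at this
  have hdyy' : G.dist y y' ≠ 0 := fun h => hne ((hG.dist_eq_zero_iff).mp h)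
  by_cases hu : u = y
  · rw [hu] at B1 B2 B3
    by_cases h1 : p 1 = y
    · -- shift chain, same endpoints
      obtain ⟨u2, hu2Y, hd2, hb2, n3, hn3, rest⟩ :=
        IH (n - 1) (by omega) y y' hy hy' hne (fun i => p (i + 1)) (show p (0+1) = y from h1)
          (by show p (n - 1 + 1) = y'; rw [Nat.sub_add_cancel hnpos, hpn])
          (fun i hi => hpY (i + 1) (by omega)) (fun i hi => hpd (i + 1) (by omega))
      exact ⟨u2, hu2Y, hd2, hb2, n3, by omega, rest⟩
    · have hy1 : G.dist y (p 1) = 1 := by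
        have : G.dist y (p 1) ≠ 0 := fun h => h1 ((hG.dist_eq_zero_iff).mp h).symm
        omega
      have hB2' : G.dist (p 1) y + G.dist y y' = G.dist (p 1) y' := B2
      have hp1y' : p 1 ≠ y' := by
        intro h
        rw [h] at hB2'
        rw [hG.dist_eq_zero_iff.mpr rfl] at hB2'
        rw [SimpleGraph.dist_comm] at hB2'
        omega
      obtain ⟨u1, hu1Y, hdu1, hbetw1, n2, hn2, c2, hc20, hc2n, hc2Y, hc2d⟩ :=
        IH (n - 1) (by omega) (p 1) y' hp1Y hy' hp1y' (fun i => p (i + 1)) rfl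
          (by show p (n - 1 + 1) = y'; rw [Nat.sub_add_cancel hnpos, hpn])
          (fun i hi => hpY (i + 1) (by omega)) (fun i hi => hpd (i + 1) (by omega))
      by_cases hu1 : u1 = y
      · subst hu1
        obtain ⟨u2, hu2Y, hd2, hb2, n3, hn3, rest⟩ :=
          IH n2 (by omega) u1 y' hu1Y hy' hne c2 hc20 hc2n hc2Y hc2d
        exact ⟨u2, hu2Y, hd2, hb2, n3, by omega, rest⟩
      · set s := m y u1 y' with hs_def
        have hsY : s ∈ Y := hsub y hy u1 hu1Y y' hy'
        obtain ⟨⟨A1, A2, A3⟩, -⟩ := hm.2 y u1 y'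
        rw [← hs_def] at A1 A2 A3
        have hdu1y' : G.dist u1 y' = G.dist y y' := by
          rw [SimpleGraph.dist_comm (u := p 1) (v := y)] at hB2'
          rw [hy1] at hB2'
          omega
        have hkey : G.dist u1 s = G.dist y s := by
          rw [hdu1y'] at A2; omega
        have htri : G.dist y u1 ≤ 2 := by
          have := hG.dist_triangle (u := y) (v := p 1) (w := u1)
          omega
        have hsu1 : G.dist s u1 = G.dist y s := by rw [SimpleGraph.dist_comm]; exact hkey
        have hys_le : G.dist y s ≤ 1 := by rw [hsu1] at A1; omega
        have hys : G.dist y s = 1 := by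
          rcases Nat.lt_or_ge (G.dist y s) 1 with h | h
          · exfalso
            have hs0 : G.dist y s = 0 := by omega
            have hu1s : u1 = s := (hG.dist_eq_zero_iff).mp (by rw [hkey, hs0])
            have hys' : y = s := (hG.dist_eq_zero_iff).mp hs0
            exact hu1 (hu1s.trans hys'.symm)
          · omega
        refine ⟨s, hsY, hys, A3, n2 + 1, by omega,
          fun i => if i = 0 then s else c2 (i - 1), rfl, by simp [hc2n], ?_, ?_⟩
        · intro i hi
          by_cases h0 : i = 0
          · simp [h0, hsY]
          · simp only [h0, if_neg]
            exact hc2Y (i - 1) (by omega)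
        · intro i hi
          by_cases h0 : i = 0
          · subst h0
            simp only [if_pos rfl, if_neg (Nat.one_ne_zero)]
            show G.dist s (c2 0) ≤ 1
            rw [hc20, hsu1, hys]
          · simp only [if_neg h0, if_neg (by omega : i + 1 ≠ 0)]
            have : i - 1 + 1 = i := by omega
            have hd := hc2d (i - 1) (by omega)
            rwa [this] at hd
  · -- u ≠ y : u = p 1, distance 1, strictly towards y'
    have hdyu : G.dist y u ≠ 0 := fun h => hu ((hG.dist_eq_zero_iff).mp h).symm
    have hdyu1 : G.dist y u = 1 := by omega
    have hup1 : u = p 1 := by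
      have h0 : G.dist u (p 1) = 0 := by omega
      exact (hG.dist_eq_zero_iff).mp h0
    refine ⟨u, huY, hdyu1, B3, n - 1, by omega, fun i => p (i + 1), by rw [hup1], ?_, ?_, ?_⟩
    · show p (n - 1 + 1) = y'; rw [Nat.sub_add_cancel hnpos, hpn]
    · exact fun i hi => hpY (i + 1) (by omega)
    · exact fun i hi => hpd (i + 1) (by omega)

private lemma chain_geodesic {V : Type*} {G : SimpleGraph V} {m : V → V → V → V}
    (hm : IsMedianFn G m) {Y : Set V} (hsub : IsSubalgebra m Y) :
    ∀ n : ℕ, ∀ y y' : V, y ∈ Y → y' ∈ Y →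
    ∀ p : ℕ → V, p 0 = y → p n = y' → (∀ i ≤ n, p i ∈ Y) →
    (∀ i < n, G.dist (p i) (p (i + 1)) ≤ 1) →
    ∃ w : G.Walk y y', w.length = G.dist y y' ∧ ∀ v ∈ w.support, v ∈ Y := by
  have hG := hm.1
  intro n
  induction n using Nat.strong_induction_on with
  | _ n IH =>
  intro y y' hy hy' p hp0 hpn hpY hpd
  by_cases hne : y = y'
  · subst hne
    refine ⟨SimpleGraph.Walk.nil, ?_, ?_⟩
    · simp [SimpleGraph.dist_self]
    · intro v hv
      simp only [SimpleGraph.Walk.support_nil, List.mem_singleton] at hv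
      rwa [hv]
  · obtain ⟨u, huY, hdu, hbetw, n', hn', q, hq0, hqn, hqY, hqd⟩ :=
      median_step hm hsub n y y' hy hy' hne p hp0 hpn hpY hpd
    obtain ⟨w', hw'len, hw'Y⟩ := IH n' hn' u y' huY hy' q hq0 hqn hqY hqd
    have hadj : G.Adj y u := SimpleGraph.dist_eq_one_iff_adj.mp hdu
    refine ⟨SimpleGraph.Walk.cons hadj w', ?_, ?_⟩
    · rw [SimpleGraph.Walk.length_cons, hw'len]; omega
    · intro v hv
      rw [SimpleGraph.Walk.support_cons, List.mem_cons] at hv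
      rcases hv with rfl | hv
      · exact hy
      · exact hw'Y v hv

private lemma walk_lift {V : Type*} (G : SimpleGraph V) (Y : Set V) :
    ∀ {a b : V} (w : G.Walk a b), (∀ v ∈ w.support, v ∈ Y) → ∀ (ha : a ∈ Y) (hb : b ∈ Y),
    ∃ w' : (G.induce Y).Walk ⟨a, ha⟩ ⟨b, hb⟩, w'.length = w.length := by
  intro a b w
  induction w with
  | nil => intro _ ha hb; exact ⟨SimpleGraph.Walk.nil, rfl⟩
  | @cons a c b h p ih =>
    intro hw ha hb
    have hc : c ∈ Y := hw c (by simp [SimpleGraph.Walk.support_cons])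
    obtain ⟨w', hl⟩ := ih (fun v hv => hw v (by simp [SimpleGraph.Walk.support_cons, hv])) hc hb
    exact ⟨SimpleGraph.Walk.cons (by exact h : (G.induce Y).Adj ⟨a, ha⟩ ⟨c, hc⟩) w',
      by change w'.length + 1 = p.length + 1; rw [hl]⟩

/-- A 1-connected median subalgebra of a median graph is isometrically
embedded: any two of its points are joined by a geodesic of `G` lying in `Y`,
and the induced-subgraph distance agrees with the ambient distance. -/
theorem stmt0 {V : Type*} (G : SimpleGraph V) (m : V → V → V → V)
    (hm : IsMedianFn G m) (Y : Set V) (hsub : IsSubalgebra m Y)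
    (hconn : CConnected G 1 Y) (y y' : V) (hy : y ∈ Y) (hy' : y' ∈ Y) :
    (∃ w : G.Walk y y', w.length = G.dist y y' ∧ ∀ v ∈ w.support, v ∈ Y) ∧
    (G.induce Y).dist ⟨y, hy⟩ ⟨y', hy'⟩ = G.dist y y' := by
  obtain ⟨n, p, hp0, hpn, hpY, hpd⟩ := hconn y hy y' hy'
  obtain ⟨w, hwlen, hwY⟩ := chain_geodesic hm hsub n y y' hy hy' p hp0 hpn hpY hpd
  refine ⟨⟨w, hwlen, hwY⟩, ?_⟩
  obtain ⟨w', hw'len⟩ := walk_lift G Y w hwY hy hy'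
  apply le_antisymm
  · calc (G.induce Y).dist ⟨y, hy⟩ ⟨y', hy'⟩ ≤ w'.length := SimpleGraph.dist_le w'
      _ = G.dist y y' := by rw [hw'len, hwlen]
  · obtain ⟨w'', hw''⟩ := (w'.reachable).exists_walk_length_eq_dist
    calc G.dist y y' ≤ (w''.map (SimpleGraph.Embedding.induce Y).toHom).length :=
          SimpleGraph.dist_le _
      _ = w''.length := SimpleGraph.Walk.length_map _ _
      _ = _ := hw''
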